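/- For the game R = 10, S = 1, T = 8, P = 9 and any population size N > 10, assortment favours cooperation in the weak sense (since R - P - S + T = 8 > 0) but not in the strong sense: there exists i with 1 ≤ i ≤ N-1 such that (1 - i/N)(R-S) + (i/N)(T-P) ≤ 0. -/

import Mathlib

/-- Example game (R,S,T,P) = (10,1,8,9): weak favouring holds but strong favouring fails
for N > 10. -/
theorem weak_but_not_strong_example (N : ℕ) (hN : 10 < N) :
    ((10 : ℝ) - 9 - 1 + 8 > 0)
    ∧ ∃ i : ℕ, 1 ≤ i ∧ i ≤ N - 1 ∧
        (1 - (i : ℝ) / N) * ((10 : ℝ) - 1) + ((i : ℝ) / N) * ((8 : ℝ) - 9) ≤ 0 := by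
  refine ⟨by norm_num, N - 1, by omega, le_refl _, ?_⟩
  have hN0 : (0 : ℝ) < N := by positivity
  have hcast : ((N - 1 : ℕ) : ℝ) = (N : ℝ) - 1 := by
    have : 1 ≤ N := by omega
    push_cast [this]; ring
  rw [hcast]
  have h10 : (10 : ℝ) ≤ N := by exact_mod_cast hN.le
  have h := hN0.ne'
  field_simp
  nlinarith
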